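/- Destabilization occurs before the totient: let s ≥ 2, let S : Fin s → MvPolynomial (Fin n) ℝ be a nonzero tuple, let i : Fin n, and let Φ be the least positive integer with E_i^Φ S = 0. Then there exists k with 0 ≤ k < Φ such that the tuple obtained from E_i^k S by substituting x_i = 0 (i.e. applying entrywise the algebra map aeval sending X i to 0 and X j to X j for j ≠ i) is not the zero tuple. -/

import Mathlib

open MvPolynomial MeasureTheory

/-- The expansion operator in direction `i`: the paper's composite map
`(γ⁻¹ ∘ β ∘ γ ∘ ∇)_{[x_i]}`, sending a tuple `S` to the tuple whose `k`-th entry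
is the sum of the partial derivatives (in direction `i`) of all other entries. -/
noncomputable def expandDir {s n : ℕ} (i : Fin n) (S : Fin s → MvPolynomial (Fin n) ℝ) :
    Fin s → MvPolynomial (Fin n) ℝ :=
  fun k => ∑ t ∈ Finset.univ.filter (fun t => t ≠ k), MvPolynomial.pderiv i (S t)

/-- The mixed expansion operator `M = E_{σ 0} ∘ E_{σ 1} ∘ ⋯ ∘ E_{σ (l-1)}`. -/
noncomputable def mixedExpand {s n l : ℕ} (σ : Fin l → Fin n) :
    (Fin s → MvPolynomial (Fin n) ℝ) → (Fin s → MvPolynomial (Fin n) ℝ) :=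
  (List.ofFn (fun i => expandDir (s := s) (σ i))).foldr (fun f g => f ∘ g) id

/-- Substitution of `x i = 0` (all other variables are left alone). -/
noncomputable def evalZeroAt {n : ℕ} (i : Fin n) :
    MvPolynomial (Fin n) ℝ →ₐ[ℝ] MvPolynomial (Fin n) ℝ :=
  MvPolynomial.aeval (fun j => if j = i then 0 else MvPolynomial.X j)

lemma coeff_pderiv' {n : ℕ} (i : Fin n) (p : MvPolynomial (Fin n) ℝ) (m : Fin n →₀ ℕ) :
    coeff m (pderiv i p) = ((m i + 1 : ℕ) : ℝ) * coeff (m + Finsupp.single i 1) p := by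
  induction p using MvPolynomial.induction_on' with
  | monomial u c =>
    rw [pderiv_monomial, coeff_monomial, coeff_monomial]
    by_cases h : u = m + Finsupp.single i 1
    · subst h
      simp [add_tsub_cancel_right, Finsupp.add_apply, mul_comm]
    · rw [if_neg h]
      by_cases hu : u i = 0
      · have : (u i : ℝ) = 0 := by exact_mod_cast hu
        simp [this]
      · have hne : u - Finsupp.single i 1 ≠ m := by
          intro he
          apply h
          ext j
          have := DFunLike.congr_fun he j
          simp only [Finsupp.tsub_apply] at this
          by_cases hj : j = i
          · subst hj
            simp only [Finsupp.single_eq_same] at this ⊢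
            simp [Finsupp.add_apply]
            omega
          · simp only [Finsupp.single_eq_of_ne' (Ne.symm hj)] at this
            simp [Finsupp.add_apply, Finsupp.single_eq_of_ne' (Ne.symm hj)]
            omega
        rw [if_neg hne, mul_zero]
  | add p q hp hq => simp [hp, hq, mul_add]

lemma coeff_zero_of_pderiv_zero {n : ℕ} (i : Fin n) (p : MvPolynomial (Fin n) ℝ)
    (hp : pderiv i p = 0) (m : Fin n →₀ ℕ) (hm : m i ≠ 0) : coeff m p = 0 := by
  set m' := m - Finsupp.single i 1 with hm'
  have hmm : m' + Finsupp.single i 1 = m := by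
    ext j
    by_cases hj : j = i
    · subst hj; simp [hm', Finsupp.add_apply]; omega
    · simp [hm', Finsupp.add_apply, Finsupp.single_eq_of_ne' (Ne.symm hj)]
  have := coeff_pderiv' i p m'
  rw [hp, hmm] at this
  simp only [coeff_zero] at this
  have hpos : ((m' i + 1 : ℕ) : ℝ) ≠ 0 := by positivity
  exact (mul_eq_zero.mp this.symm).resolve_left hpos


lemma evalZeroAt_fix {n : ℕ} (i : Fin n) (p : MvPolynomial (Fin n) ℝ)
    (hp : pderiv i p = 0) : evalZeroAt i p = p := by
  have h1 : evalZeroAt i p = ∑ m ∈ p.support, evalZeroAt i (monomial m (coeff m p)) := by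
    rw [← map_sum, ← p.as_sum]
  rw [h1]
  conv_rhs => rw [p.as_sum]
  apply Finset.sum_congr rfl
  intro m hm
  have hmi : m i = 0 := by
    by_contra h
    exact (MvPolynomial.mem_support_iff.mp hm) (coeff_zero_of_pderiv_zero i p hp m h)
  rw [evalZeroAt, aeval_monomial, monomial_eq]
  congr 1
  rw [Finsupp.prod]
  apply Finset.prod_congr rfl
  intro j hj
  have : j ≠ i := by
    intro h; subst h
    exact (Finsupp.mem_support_iff.mp hj) hmi
  simp [this]


lemma pderiv_zero_of_expand_zero {s n : ℕ} (hs : 2 ≤ s) (i : Fin n)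
    (T : Fin s → MvPolynomial (Fin n) ℝ) (hT : expandDir i T = 0) (k : Fin s) :
    pderiv i (T k) = 0 := by
  set D : Fin s → MvPolynomial (Fin n) ℝ := fun t => pderiv i (T t) with hD
  set Tot : MvPolynomial (Fin n) ℝ := ∑ t, D t with hTot
  have hkey : ∀ k : Fin s, D k = Tot := by
    intro k
    have h0 : ∑ t ∈ Finset.univ.filter (fun t => t ≠ k), D t = 0 := congrFun hT k
    rw [Finset.filter_ne', Finset.sum_erase_eq_sub (Finset.mem_univ k)] at h0
    rw [hTot]
    linear_combination -h0
  have hsum : Tot = (s : ℕ) • Tot := by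
    calc Tot = ∑ _t : Fin s, Tot := by
            rw [hTot]; exact Finset.sum_congr rfl fun t _ => hkey t
      _ = (s : ℕ) • Tot := by simp
  have h2 : ((s : ℝ) - 1) • Tot = 0 := by
    have := hsum
    rw [← Nat.cast_smul_eq_nsmul ℝ] at this
    rw [sub_smul, one_smul]
    linear_combination -this
  have hc : ((s : ℝ) - 1) ≠ 0 := by
    have : (2 : ℝ) ≤ (s : ℝ) := by exact_mod_cast hs
    intro h; linarith [sub_eq_zero.mp h]
  have hTot0 : Tot = 0 := by
    calc Tot = ((s : ℝ) - 1)⁻¹ • (((s : ℝ) - 1) • Tot) := by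
          rw [smul_smul, inv_mul_cancel₀ hc, one_smul]
      _ = 0 := by rw [h2, smul_zero]
  exact (hkey k).trans hTot0

/-- destabilization occurs at some stage strictly before the totient. -/
theorem destabilization_before_totient (s n : ℕ) (hs : 2 ≤ s) (i : Fin n)
    (S : Fin s → MvPolynomial (Fin n) ℝ) (hS : S ≠ 0) (Φ : ℕ)
    (hΦ : IsLeast {m | 0 < m ∧ (expandDir i)^[m] S = 0} Φ) :
    ∃ k : ℕ, k < Φ ∧
      (fun r : Fin s => evalZeroAt i (((expandDir i)^[k] S) r)) ≠ 0 := by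
  by_contra hcon
  push_neg at hcon
  have key : ∀ d : ℕ, (expandDir i)^[Φ - d] S = 0 := by
    intro d
    induction d with
    | zero => simpa using hΦ.1.2
    | succ d ih =>
      rcases Nat.lt_or_ge d Φ with hd | hd
      · set k := Φ - (d + 1) with hkdef
        have hk1 : k + 1 = Φ - d := by omega
        have hkΦ : k < Φ := by omega
        have hE : expandDir i ((expandDir i)^[k] S) = 0 := by
          rw [← hk1, Function.iterate_succ_apply'] at ih
          exact ih
        have hev := hcon k hkΦ
        funext r
        have hder := pderiv_zero_of_expand_zero hs i _ hE r
        have hfix := evalZeroAt_fix i _ hder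
        have hz : evalZeroAt i (((expandDir i)^[k] S) r) = 0 := congrFun hev r
        rw [← hfix]
        simpa using hz
      · have heq : Φ - (d + 1) = Φ - d := by omega
        rw [heq]
        exact ih
  apply hS
  simpa using key Φ
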